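/- For any θ ∈ ℝ, the maps H^θ : C([0,∞);ℝ) → C([0,∞);ℝ) (reflection after last visit to the line s ↦ θs/2, set to the identity on paths that visit the line at arbitrarily large times) and τ_frag : C([0,∞);ℝ)² → [0,∞] are Borel measurable. -/

import Mathlib

open MeasureTheory ProbabilityTheory Filter Set
open scoped ENNReal

noncomputable section

/-- Time inversion: `(I w)(t) = t * w(1/t)` for `t ≠ 0`, and `(I w)(0) = lim_{u→∞} w(u)/u`. -/
def invPath (w : ℝ → ℝ) : ℝ → ℝ := fun t =>
  if t = 0 then limUnder atTop (fun u => w u / u) else t * w (1 / t)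

/-- Last visit time of `w` to the line `s ↦ θ s / 2`, as an extended nonnegative real. -/
def lastVisit (θ : ℝ) (w : ℝ → ℝ) : ℝ≥0∞ :=
  sSup (ENNReal.ofReal '' {s : ℝ | 0 ≤ s ∧ w s = θ * s / 2})

/-- Reflection of `w` across the line `s ↦ θ s / 2` after the last visit of `w` to that line
(identity if `w` visits the line at arbitrarily large times). -/
def Hmap (θ : ℝ) (w : ℝ → ℝ) : ℝ → ℝ := fun t =>
  if ENNReal.ofReal t ≤ lastVisit θ w then w t else θ * t - w t

/-- Fragmentation time `inf {t ≥ 0 : w₁ t ≠ w₂ t}` with `inf ∅ = ∞`. -/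
def fragTime (w₁ w₂ : ℝ → ℝ) : ℝ≥0∞ :=
  sInf (ENNReal.ofReal '' {t : ℝ | 0 ≤ t ∧ w₁ t ≠ w₂ t})

/-- First hitting time of level `a` by the path `w`, with `inf ∅ = ∞`. -/
def firstHit (a : ℝ) (w : ℝ → ℝ) : ℝ≥0∞ :=
  sInf (ENNReal.ofReal '' {s : ℝ | 0 ≤ s ∧ w s = a})

/-- `B` is a standard Brownian motion (started at `0`, drift `0`) on `[0,∞)` under `P`. -/
def IsStandardBM {Ω : Type*} [MeasurableSpace Ω] (P : Measure Ω) (B : Ω → ℝ → ℝ) : Prop :=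
  (∀ t : ℝ, Measurable (fun ω => B ω t)) ∧
  (∀ᵐ ω ∂P, B ω 0 = 0) ∧
  (∀ᵐ ω ∂P, ContinuousOn (B ω) (Set.Ici 0)) ∧
  (∀ s t : ℝ, 0 ≤ s → s ≤ t →
    P.map (fun ω => B ω t - B ω s) = gaussianReal 0 (Real.toNNReal (t - s))) ∧
  (∀ (n : ℕ) (t : Fin (n + 1) → ℝ), Monotone t → 0 ≤ t 0 →
    iIndepFun
      (fun (i : Fin n) ω => B ω (t i.succ) - B ω (t i.castSucc)) P)

/-- `B` is a Brownian motion started at `δ` with drift `θ` under `P`. -/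
def IsBM {Ω : Type*} [MeasurableSpace Ω] (θ δ : ℝ) (P : Measure Ω) (B : Ω → ℝ → ℝ) : Prop :=
  IsStandardBM P (fun ω t => B ω t - θ * t - δ)

open scoped Classical

/-- On a rational-left-endpoint compact interval, a continuous function has a zero iff the
infimum of `|f|` over the rationals of the interval is zero. -/
lemma exists_zero_iff_iInf_eq_zero (f : ℝ → ℝ) (hf : Continuous f) (a : ℚ) (b : ℝ) :
    (∃ s ∈ Set.Icc (a : ℝ) b, f s = 0) ↔
      (⨅ (r : ℚ) (_ : (r : ℝ) ∈ Set.Icc (a : ℝ) b), ENNReal.ofReal |f r|) = 0 := by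
  constructor
  · rintro ⟨s, hs, hfs⟩
    by_contra h0
    have hpos : 0 < ⨅ (r : ℚ) (_ : (r : ℝ) ∈ Set.Icc (a : ℝ) b), ENNReal.ofReal |f r| :=
      pos_iff_ne_zero.mpr h0
    obtain ⟨ε, -, hε1, hε2⟩ := ENNReal.lt_iff_exists_real_btwn.mp hpos
    have hεpos : 0 < ε := ENNReal.ofReal_pos.mp hε1
    have key : ∀ r : ℚ, (r : ℝ) ∈ Set.Icc (a : ℝ) b → ε ≤ |f r| := by
      intro r hr
      by_contra hlt
      push_neg at hlt
      have h1 : ENNReal.ofReal |f r| < ENNReal.ofReal ε :=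
        (ENNReal.ofReal_lt_ofReal_iff hεpos).mpr hlt
      have h2 : (⨅ (r : ℚ) (_ : (r : ℝ) ∈ Set.Icc (a : ℝ) b), ENNReal.ofReal |f r|)
          ≤ ENNReal.ofReal |f r| := iInf₂_le r hr
      exact absurd (h2.trans_lt h1) (not_lt.mpr hε2.le)
    obtain ⟨δ, hδpos, hδ⟩ := Metric.continuousAt_iff.mp (hf.continuousAt (x := s)) ε hεpos
    rcases eq_or_lt_of_le hs.1 with heq | hlt
    · have := key a ⟨le_rfl, heq ▸ hs.2⟩
      rw [heq, hfs, abs_zero] at this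
      exact absurd this (not_le.mpr hεpos)
    · obtain ⟨r, hr1, hr2⟩ := exists_rat_btwn (max_lt hlt (by linarith : s - δ < s))
      have hrI : (r : ℝ) ∈ Set.Icc (a : ℝ) b :=
        ⟨((le_max_left _ _).trans_lt hr1).le, hr2.le.trans hs.2⟩
      have hdist : dist (r : ℝ) s < δ := by
        rw [Real.dist_eq, abs_lt]
        constructor
        · linarith [(le_max_right (a : ℝ) (s - δ)).trans_lt hr1]
        · linarith
      have := hδ hdist
      rw [hfs, dist_zero_right] at this
      exact absurd this (not_lt.mpr (key r hrI))
  · intro h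
    by_cases hab : (a : ℝ) ≤ b
    · obtain ⟨s0, hs0, hmin⟩ :=
        isCompact_Icc.exists_isMinOn (Set.nonempty_Icc.mpr hab)
          (hf.abs.continuousOn : ContinuousOn (fun x => |f x|) (Set.Icc (a : ℝ) b))
      have hle : ENNReal.ofReal |f s0|
          ≤ ⨅ (r : ℚ) (_ : (r : ℝ) ∈ Set.Icc (a : ℝ) b), ENNReal.ofReal |f r| :=
        le_iInf₂ fun r hr => ENNReal.ofReal_le_ofReal (hmin hr)
      rw [h, nonpos_iff_eq_zero, ENNReal.ofReal_eq_zero] at hle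
      exact ⟨s0, hs0, abs_nonpos_iff.mp hle⟩
    · exfalso
      have hempty : ∀ r : ℚ, ¬ ((r : ℝ) ∈ Set.Icc (a : ℝ) b) := fun r hr =>
        hab (hr.1.trans hr.2)
      simp [hempty] at h

lemma measurableSet_visits (θ : ℝ) [MeasurableSpace C(ℝ, ℝ)] [BorelSpace C(ℝ, ℝ)] (q : ℚ) :
    MeasurableSet {w : C(ℝ, ℝ) | ∃ s : ℝ, (q : ℝ) ≤ s ∧ 0 ≤ s ∧ w s = θ * s / 2} := by
  have heq : {w : C(ℝ, ℝ) | ∃ s : ℝ, (q : ℝ) ≤ s ∧ 0 ≤ s ∧ w s = θ * s / 2} =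
      ⋃ n : ℕ, {w : C(ℝ, ℝ) |
        (⨅ (r : ℚ) (_ : (r : ℝ) ∈ Set.Icc ((max q 0 : ℚ) : ℝ) (n : ℝ)),
          ENNReal.ofReal |w r - θ * r / 2|) = 0} := by
    ext w
    simp only [Set.mem_setOf_eq, Set.mem_iUnion]
    constructor
    · rintro ⟨s, hqs, h0s, hws⟩
      refine ⟨⌈s⌉₊, (exists_zero_iff_iInf_eq_zero (fun x => w x - θ * x / 2)
        (w.continuous.sub (by continuity)) _ _).mp ⟨s, ⟨?_, Nat.le_ceil s⟩, sub_eq_zero.mpr hws⟩⟩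
      push_cast
      exact max_le hqs h0s
    · rintro ⟨n, hn⟩
      obtain ⟨s, hsI, hfs⟩ := (exists_zero_iff_iInf_eq_zero (fun x => w x - θ * x / 2)
        (w.continuous.sub (by continuity)) _ _).mpr hn
      have hcast : ((max q 0 : ℚ) : ℝ) = max (q : ℝ) 0 := by push_cast; rfl
      rw [hcast] at hsI
      exact ⟨s, (le_max_left _ _).trans hsI.1, (le_max_right _ _).trans hsI.1,
        sub_eq_zero.mp hfs⟩
  rw [heq]
  refine MeasurableSet.iUnion fun n => ?_
  have hg : Measurable fun w : C(ℝ, ℝ) =>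
      ⨅ (r : ℚ) (_ : (r : ℝ) ∈ Set.Icc ((max q 0 : ℚ) : ℝ) (n : ℝ)),
        ENNReal.ofReal |w r - θ * r / 2| := by
    refine Measurable.iInf fun r => Measurable.iInf fun _ => ?_
    exact ENNReal.measurable_ofReal.comp
      (((continuous_eval_const (r : ℝ)).measurable.sub measurable_const).abs)
  exact hg (measurableSet_singleton 0)

lemma lastVisit_eq_iSup (θ : ℝ) (w : C(ℝ, ℝ)) :
    lastVisit θ ⇑w = ⨆ q : ℚ,
      if ∃ s : ℝ, (q : ℝ) ≤ s ∧ 0 ≤ s ∧ w s = θ * s / 2 then ENNReal.ofReal q else 0 := by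
  unfold lastVisit
  apply le_antisymm
  · refine sSup_le ?_
    rintro x ⟨s, ⟨hs0, hws⟩, rfl⟩
    refine le_of_forall_lt fun c hc => ?_
    have hspos : 0 < s := by
      by_contra hns
      push_neg at hns
      rw [ENNReal.ofReal_eq_zero.mpr hns] at hc
      exact absurd hc (not_lt.mpr (zero_le : (0 : ℝ≥0∞) ≤ c))
    obtain ⟨q, hq0, hq1, hq2⟩ := ENNReal.lt_iff_exists_rat_btwn.mp hc
    have hq2' : ENNReal.ofReal (q : ℝ) < ENNReal.ofReal s := hq2
    have hqs : (q : ℝ) ≤ s := ((ENNReal.ofReal_lt_ofReal_iff hspos).mp hq2').le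
    have hterm : (if ∃ s : ℝ, (q : ℝ) ≤ s ∧ 0 ≤ s ∧ w s = θ * s / 2
        then ENNReal.ofReal q else 0) = ENNReal.ofReal q :=
      if_pos ⟨s, hqs, hs0, hws⟩
    have hq1' : c < ENNReal.ofReal (q : ℝ) := hq1
    refine lt_of_lt_of_le hq1' ?_
    rw [← hterm]
    exact le_iSup (fun q : ℚ => if ∃ s : ℝ, (q : ℝ) ≤ s ∧ 0 ≤ s ∧ w s = θ * s / 2
      then ENNReal.ofReal (q : ℝ) else 0) q
  · refine iSup_le fun q => ?_
    split_ifs with h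
    · obtain ⟨s, h1, h2, h3⟩ := h
      exact (ENNReal.ofReal_le_ofReal h1).trans (le_sSup ⟨s, ⟨h2, h3⟩, rfl⟩)
    · exact zero_le

lemma measurable_lastVisit (θ : ℝ) [MeasurableSpace C(ℝ, ℝ)] [BorelSpace C(ℝ, ℝ)] :
    Measurable fun w : C(ℝ, ℝ) => lastVisit θ ⇑w := by
  have : (fun w : C(ℝ, ℝ) => lastVisit θ ⇑w) = fun w => ⨆ q : ℚ,
      if ∃ s : ℝ, (q : ℝ) ≤ s ∧ 0 ≤ s ∧ w s = θ * s / 2 then ENNReal.ofReal q else 0 := by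
    funext w; exact lastVisit_eq_iSup θ w
  rw [this]
  exact Measurable.iSup fun q =>
    Measurable.ite (measurableSet_visits θ q) measurable_const measurable_const

lemma fragTime_eq_iInf (w₁ w₂ : C(ℝ, ℝ)) :
    fragTime ⇑w₁ ⇑w₂ = ⨅ q : ℚ,
      if 0 ≤ (q : ℝ) ∧ w₁ q ≠ w₂ q then ENNReal.ofReal q else ⊤ := by
  unfold fragTime
  apply le_antisymm
  · refine le_iInf fun q => ?_
    split_ifs with h
    · exact sInf_le ⟨(q : ℝ), h, rfl⟩
    · exact le_top
  · refine le_sInf ?_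
    rintro x ⟨t, ⟨ht0, hw⟩, rfl⟩
    rcases eq_or_lt_of_le ht0 with heq | htpos
    · refine iInf_le_of_le 0 ?_
      rw [if_pos ⟨by norm_num, by rw [Rat.cast_zero, heq]; exact hw⟩]
      simp
    · have hU : IsOpen {s : ℝ | w₁ s ≠ w₂ s} := by
        have : {s : ℝ | w₁ s ≠ w₂ s} = (fun s => w₁ s - w₂ s) ⁻¹' {0}ᶜ := by
          ext s; simp [sub_eq_zero]
        rw [this]
        exact (isOpen_compl_singleton).preimage (w₁.continuous.sub w₂.continuous)
      obtain ⟨δ, hδpos, hδ⟩ := Metric.isOpen_iff.mp hU t hw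
      obtain ⟨q, hq1, hq2⟩ := exists_rat_btwn (max_lt htpos (by linarith : t - δ < t))
      have hq0 : (0 : ℝ) ≤ q := ((le_max_left _ _).trans_lt hq1).le
      have hqU : (q : ℝ) ∈ {s : ℝ | w₁ s ≠ w₂ s} := hδ (by
        rw [Metric.mem_ball, Real.dist_eq, abs_lt]
        constructor
        · linarith [(le_max_right (0 : ℝ) (t - δ)).trans_lt hq1]
        · linarith)
      refine iInf_le_of_le q ?_
      rw [if_pos ⟨hq0, hqU⟩]
      exact ENNReal.ofReal_le_ofReal hq2.le

lemma measurable_fragTime [MeasurableSpace C(ℝ, ℝ)] [BorelSpace C(ℝ, ℝ)] :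
    Measurable fun p : C(ℝ, ℝ) × C(ℝ, ℝ) => fragTime ⇑p.1 ⇑p.2 := by
  have : (fun p : C(ℝ, ℝ) × C(ℝ, ℝ) => fragTime ⇑p.1 ⇑p.2) = fun p => ⨅ q : ℚ,
      if 0 ≤ (q : ℝ) ∧ p.1 q ≠ p.2 q then ENNReal.ofReal q else ⊤ := by
    funext p; exact fragTime_eq_iInf p.1 p.2
  rw [this]
  refine Measurable.iInf fun q => ?_
  have h1 : Measurable fun p : C(ℝ, ℝ) × C(ℝ, ℝ) => p.1 (q : ℝ) :=
    (continuous_eval_const (q : ℝ)).measurable.comp measurable_fst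
  have h2 : Measurable fun p : C(ℝ, ℝ) × C(ℝ, ℝ) => p.2 (q : ℝ) :=
    (continuous_eval_const (q : ℝ)).measurable.comp measurable_snd
  have hset : MeasurableSet {p : C(ℝ, ℝ) × C(ℝ, ℝ) | 0 ≤ (q : ℝ) ∧ p.1 q ≠ p.2 q} := by
    by_cases hq : (0 : ℝ) ≤ q
    · have : {p : C(ℝ, ℝ) × C(ℝ, ℝ) | 0 ≤ (q : ℝ) ∧ p.1 q ≠ p.2 q}
          = {p : C(ℝ, ℝ) × C(ℝ, ℝ) | p.1 q = p.2 q}ᶜ := by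
        ext p; simp [hq]
      rw [this]
      exact (measurableSet_eq_fun h1 h2).compl
    · have : {p : C(ℝ, ℝ) × C(ℝ, ℝ) | 0 ≤ (q : ℝ) ∧ p.1 q ≠ p.2 q} = ∅ := by
        ext p; simp [hq]
      rw [this]
      exact MeasurableSet.empty
  exact Measurable.ite hset measurable_const measurable_const

/-- for every `θ`, the map `H^θ` on continuous paths and the fragmentation time
`τ_frag` on pairs of continuous paths are Borel measurable (path space carries the topology of
uniform convergence on compacts, i.e. the compact-open topology, and its Borel σ-algebra). -/
theorem Hmap_fragTime_measurable (θ : ℝ)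
    [MeasurableSpace C(ℝ, ℝ)] [BorelSpace C(ℝ, ℝ)] :
    Measurable (fun w : C(ℝ, ℝ) => (Hmap θ ⇑w : ℝ → ℝ)) ∧
    Measurable (fun p : C(ℝ, ℝ) × C(ℝ, ℝ) => fragTime ⇑p.1 ⇑p.2) := by
  refine ⟨?_, measurable_fragTime⟩
  refine measurable_pi_lambda _ fun t => ?_
  have hev : Measurable fun w : C(ℝ, ℝ) => w t := (continuous_eval_const t).measurable
  simp only [Hmap]
  exact Measurable.ite (measurable_lastVisit θ measurableSet_Ici) hev
    (measurable_const.sub hev)
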